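/- Given p ∈ D_d and any selection σ, the extremal pmf f^σ belongs to P(p), its Shannon entropy satisfies H(f^σ) = −∑_{k=0}^d p_k log p_k (the entropy of p itself), and H(f) ≥ H(f^σ) for every f ∈ P(p); i.e., every extremal pmf minimizes the Shannon entropy over P(p). -/
import Mathlib


open Finset MeasureTheory Real

noncomputable section

/-- Weight of a binary vector: number of ones. -/
def wt {d : ℕ} (x : Fin d → Bool) : ℕ := (Finset.univ.filter (fun i => x i = true)).card

/-- The set `F_d` of `d`-variate Bernoulli pmfs. -/
def Fd (d : ℕ) : Set ((Fin d → Bool) → ℝ) :=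
  {f | (∀ x, 0 ≤ f x) ∧ ∑ x, f x = 1}

/-- The simplex `D_d` of pmfs on `{0,…,d}`. -/
def Dd (d : ℕ) : Set (Fin (d + 1) → ℝ) :=
  {p | (∀ k, 0 ≤ p k) ∧ ∑ k, p k = 1}

/-- The pmf of the sum of the coordinates: `s(f)_k = ∑_{x : w(x)=k} f(x)`. -/
def sumPmf {d : ℕ} (f : (Fin d → Bool) → ℝ) : Fin (d + 1) → ℝ :=
  fun k => ∑ x ∈ Finset.univ.filter (fun x : Fin d → Bool => wt x = (k : ℕ)), f x

/-- `P(p) = { f ∈ F_d : s(f) = p }`. -/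
def Pp (d : ℕ) (p : Fin (d + 1) → ℝ) : Set ((Fin d → Bool) → ℝ) :=
  {f | f ∈ Fd d ∧ sumPmf f = p}

/-- A selection: `σ(k)` is a binary vector of weight `k` for each `k`. -/
def IsSelection {d : ℕ} (σ : Fin (d + 1) → (Fin d → Bool)) : Prop :=
  ∀ k, wt (σ k) = (k : ℕ)

/-- The extremal pmf `f^σ`: mass `p_k` at `σ(k)`, zero elsewhere. -/
def extPmf {d : ℕ} (p : Fin (d + 1) → ℝ) (σ : Fin (d + 1) → (Fin d → Bool)) :
    (Fin d → Bool) → ℝ :=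
  fun x => ∑ k, if σ k = x then p k else 0

/-- Shannon entropy of a pmf on a finite set (with the convention `0 · log 0 = 0`,
which holds automatically since `Real.log 0 = 0`). -/
def entropy {S : Type*} [Fintype S] (g : S → ℝ) : ℝ := -∑ s, g s * Real.log (g s)

/-- each extremal pmf `f^σ` belongs to `P(p)`, has entropy equal to the
entropy of `p`, and minimizes the Shannon entropy over `P(p)`. -/
theorem extremal_minimizes_entropy (d : ℕ) (hd : 1 ≤ d) (p : Fin (d + 1) → ℝ)
    (hp : p ∈ Dd d) (σ : Fin (d + 1) → (Fin d → Bool)) (hσ : IsSelection σ) :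
    extPmf p σ ∈ Pp d p ∧
      entropy (extPmf p σ) = -∑ k, p k * Real.log (p k) ∧
      ∀ f ∈ Pp d p, entropy (extPmf p σ) ≤ entropy f := by
  classical
  obtain ⟨hp0, hp1⟩ := hp
  have hσinj : Function.Injective σ := by
    intro a b h
    exact Fin.ext (by rw [← hσ a, ← hσ b, h])
  -- value of extPmf at σ j
  have hval : ∀ j, extPmf p σ (σ j) = p j := by
    intro j
    unfold extPmf
    rw [Finset.sum_eq_single j]
    · simp
    · intro b _ hb
      simp only [ite_eq_right_iff]
      exact fun h => absurd (hσinj h) hb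
    · simp
  have hval0 : ∀ x, x ∉ Set.range σ → extPmf p σ x = 0 := by
    intro x hx
    unfold extPmf
    apply Finset.sum_eq_zero
    intro k _
    have : σ k ≠ x := fun h => hx ⟨k, h⟩
    simp [this]
  have hnn : ∀ x, 0 ≤ extPmf p σ x := by
    intro x
    apply Finset.sum_nonneg
    intro k _
    split
    · exact hp0 k
    · exact le_rfl
  -- sumPmf of extPmf equals p
  have hsum : sumPmf (extPmf p σ) = p := by
    funext k
    unfold sumPmf extPmf
    rw [Finset.sum_comm]
    have : ∀ j : Fin (d+1),
        (∑ x ∈ Finset.univ.filter (fun x : Fin d → Bool => wt x = (k : ℕ)),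
          if σ j = x then p j else 0) = if j = k then p j else 0 := by
      intro j
      rw [Finset.sum_ite_eq]
      by_cases h : j = k
      · subst h
        simp [hσ j]
      · have : ¬ (wt (σ j) = (k : ℕ)) := by
          rw [hσ j]
          exact fun hc => h (Fin.ext hc)
        simp [this, h]
    rw [Finset.sum_congr rfl (fun j _ => this j)]
    simp
  have htot : ∑ x, extPmf p σ x = 1 := by
    unfold extPmf
    rw [Finset.sum_comm]
    have : ∀ k : Fin (d+1), (∑ x : Fin d → Bool, if σ k = x then p k else 0) = p k := by
      intro k; simp
    rw [Finset.sum_congr rfl (fun k _ => this k), hp1]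
  -- entropy of extPmf
  have hent : entropy (extPmf p σ) = -∑ k, p k * Real.log (p k) := by
    unfold entropy
    congr 1
    have himg : ∑ x ∈ Finset.univ.image σ, extPmf p σ x * Real.log (extPmf p σ x)
        = ∑ x : Fin d → Bool, extPmf p σ x * Real.log (extPmf p σ x) := by
      apply Finset.sum_subset (Finset.subset_univ _)
      intro x _ hx
      have : x ∉ Set.range σ := by
        intro ⟨k, hk⟩
        exact hx (Finset.mem_image.mpr ⟨k, Finset.mem_univ k, hk⟩)
      rw [hval0 x this]
      simp
    rw [← himg, Finset.sum_image (fun a _ b _ h => hσinj h)]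
    exact Finset.sum_congr rfl (fun k _ => by rw [hval k])
  refine ⟨⟨⟨hnn, htot⟩, hsum⟩, hent, ?_⟩
  -- minimization
  intro f hf
  obtain ⟨⟨hf0, hf1⟩, hfs⟩ := hf
  rw [hent]
  unfold entropy
  rw [neg_le_neg_iff]
  -- group sum over x by weight
  have hmap : ∀ x : Fin d → Bool, (⟨wt x, Nat.lt_succ_of_le (le_trans
      (Finset.card_filter_le _ _) (by simp))⟩ : Fin (d+1)) ∈ Finset.univ :=
    fun x => Finset.mem_univ _
  have hgroup : ∑ x : Fin d → Bool, f x * Real.log (f x)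
      = ∑ k : Fin (d+1), ∑ x ∈ Finset.univ.filter (fun x : Fin d → Bool => wt x = (k : ℕ)),
          f x * Real.log (f x) := by
    rw [← Finset.sum_fiberwise_of_maps_to (g := fun x : Fin d → Bool =>
      (⟨wt x, Nat.lt_succ_of_le (le_trans (Finset.card_filter_le _ _) (by simp))⟩ : Fin (d+1)))
      (fun x _ => Finset.mem_univ _)]
    apply Finset.sum_congr rfl
    intro k _
    apply Finset.sum_congr _ (fun _ _ => rfl)
    ext x
    simp [Fin.ext_iff]
  rw [hgroup]
  apply Finset.sum_le_sum
  intro k _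
  -- within each class, f x ≤ p k
  have hcl : ∀ x ∈ Finset.univ.filter (fun x : Fin d → Bool => wt x = (k : ℕ)), f x ≤ p k := by
    intro x hx
    calc f x ≤ ∑ y ∈ Finset.univ.filter (fun y : Fin d → Bool => wt y = (k : ℕ)), f y :=
          Finset.single_le_sum (fun y _ => hf0 y) hx
      _ = p k := by rw [← hfs]; rfl
  calc ∑ x ∈ Finset.univ.filter (fun x : Fin d → Bool => wt x = (k : ℕ)),
          f x * Real.log (f x)
      ≤ ∑ x ∈ Finset.univ.filter (fun x : Fin d → Bool => wt x = (k : ℕ)),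
          f x * Real.log (p k) := by
        apply Finset.sum_le_sum
        intro x hx
        rcases eq_or_lt_of_le (hf0 x) with h | h
        · simp [← h]
        · exact mul_le_mul_of_nonneg_left
            (Real.log_le_log h (hcl x hx)) (hf0 x)
    _ = p k * Real.log (p k) := by
        rw [← Finset.sum_mul]
        congr 1
        rw [← hfs]; rfl
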